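/- Let ϑ : Z → ℝ ∪ {+∞} be a proper, lsc, sublinear function with z̄ = 0 and let μ̄ ∈ ri ∂ϑ(0) (relative interior of the subdifferential at the origin). Then there exists ε > 0 such that for every pair (z, μ) in the graph of ∂ϑ with ‖z‖ ≤ ε and ‖μ − μ̄‖ ≤ ε, one has μ ∈ ri ∂ϑ(0) and μ ∈ ri ∂ϑ(z). -/
import Mathlib


open Filter Topology
open scoped RealInnerProductSpace

variable {Z : Type*} [NormedAddCommGroup Z] [InnerProductSpace ℝ Z] [FiniteDimensional ℝ Z]

/-- The convex subdifferential of an extended-real-valued function. -/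
def subdiff (f : Z → EReal) (x : Z) : Set Z :=
  {v | ∀ y, f x + ((⟪v, y - x⟫ : ℝ) : EReal) ≤ f y}

/-- Membership in the subdifferential at the origin for a function vanishing at `0`. -/
lemma mem_subdiff_zero {ϑ : Z → EReal} (h0 : ϑ 0 = 0) {v : Z} :
    v ∈ subdiff ϑ 0 ↔ ∀ y, ((⟪v, y⟫ : ℝ) : EReal) ≤ ϑ y := by
  unfold subdiff
  simp [h0]

/-- Key structural lemma: a subgradient at `z` has finite value `ϑ z`, the inner product
`⟪μ, z⟫` equals that value, and `μ` is a subgradient at the origin. -/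
lemma subdiff_structure {ϑ : Z → EReal} (hproper_bot : ∀ z, ϑ z ≠ ⊥)
    (hproper_top : ∃ z, ϑ z ≠ ⊤) (h0 : ϑ 0 = 0)
    (hpos : ∀ t : ℝ, 0 < t → ∀ z, ϑ (t • z) = (t : EReal) * ϑ z)
    {z μ : Z} (hμ : μ ∈ subdiff ϑ z) :
    ∃ r : ℝ, ϑ z = (r : EReal) ∧ ⟪μ, z⟫ = r ∧ μ ∈ subdiff ϑ 0 := by
  -- finiteness of ϑ z
  obtain ⟨z₀, hz₀⟩ := hproper_top
  have hne_top : ϑ z ≠ ⊤ := by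
    intro htop
    have := hμ z₀
    rw [htop, EReal.top_add_coe] at this
    exact hz₀ (top_le_iff.mp this)
  have hne_bot : ϑ z ≠ ⊥ := hproper_bot z
  obtain ⟨r, hr⟩ : ∃ r : ℝ, ϑ z = (r : EReal) := by
    lift ϑ z to ℝ using ⟨hne_top, hne_bot⟩ with r hr
    exact ⟨r, rfl⟩
  refine ⟨r, hr, ?_, ?_⟩
  · -- ⟪μ, z⟫ = r
    have h2 : ⟪μ, z⟫ ≤ r := by
      have := hμ ((2 : ℝ) • z)
      rw [hpos 2 two_pos z, hr] at this
      have hv : (2 : ℝ) • z - z = z := by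
        rw [two_smul]; abel
      rw [hv, ← EReal.coe_mul, ← EReal.coe_add, EReal.coe_le_coe_iff] at this
      linarith
    have h3 : r ≤ ⟪μ, z⟫ := by
      have := hμ ((1/2 : ℝ) • z)
      rw [hpos (1/2) (by norm_num) z, hr] at this
      have hv : (1/2 : ℝ) • z - z = (-(1/2) : ℝ) • z := by module
      rw [hv, real_inner_smul_right, ← EReal.coe_mul, ← EReal.coe_add,
        EReal.coe_le_coe_iff] at this
      linarith
    linarith
  · -- μ ∈ subdiff ϑ 0
    have hinner : ⟪μ, z⟫ = r := by
      have h2 : ⟪μ, z⟫ ≤ r := by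
        have := hμ ((2 : ℝ) • z)
        rw [hpos 2 two_pos z, hr] at this
        have hv : (2 : ℝ) • z - z = z := by rw [two_smul]; abel
        rw [hv, ← EReal.coe_mul, ← EReal.coe_add, EReal.coe_le_coe_iff] at this
        linarith
      have h3 : r ≤ ⟪μ, z⟫ := by
        have := hμ ((1/2 : ℝ) • z)
        rw [hpos (1/2) (by norm_num) z, hr] at this
        have hv : (1/2 : ℝ) • z - z = (-(1/2) : ℝ) • z := by module
        rw [hv, real_inner_smul_right, ← EReal.coe_mul, ← EReal.coe_add,
          EReal.coe_le_coe_iff] at this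
        linarith
      linarith
    rw [mem_subdiff_zero h0]
    intro y
    have := hμ y
    rw [hr] at this
    have hsum : ⟪μ, y⟫ = r + ⟪μ, y - z⟫ := by
      rw [inner_sub_right]; linarith
    calc ((⟪μ, y⟫ : ℝ) : EReal) = ((r : ℝ) : EReal) + ((⟪μ, y - z⟫ : ℝ) : EReal) := by
          rw [← EReal.coe_add, hsum]
      _ ≤ ϑ y := this

/-- If `μ̄` lies in the relative interior of `∂ϑ(0)` for a proper lsc sublinear `ϑ`, then all
pairs `(z, μ)` in the graph of `∂ϑ` near `(0, μ̄)` satisfy `μ ∈ ri ∂ϑ(0)` and `μ ∈ ri ∂ϑ(z)`. -/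
theorem relative_interior_stability (ϑ : Z → EReal)
    (hproper_bot : ∀ z, ϑ z ≠ ⊥) (hproper_top : ∃ z, ϑ z ≠ ⊤)
    (hlsc : LowerSemicontinuous ϑ)
    (h0 : ϑ 0 = 0)
    (hpos : ∀ t : ℝ, 0 < t → ∀ z, ϑ (t • z) = (t : EReal) * ϑ z)
    (hconv : ∀ z₁ z₂ : Z, ∀ a b : ℝ, 0 ≤ a → 0 ≤ b → a + b = 1 →
      ϑ (a • z₁ + b • z₂) ≤ (a : EReal) * ϑ z₁ + (b : EReal) * ϑ z₂)
    (μb : Z) (hμb : μb ∈ intrinsicInterior ℝ (subdiff ϑ 0)) :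
    ∃ ε > (0 : ℝ), ∀ z μ : Z, μ ∈ subdiff ϑ z → ‖z‖ ≤ ε → ‖μ - μb‖ ≤ ε →
      μ ∈ intrinsicInterior ℝ (subdiff ϑ 0) ∧ μ ∈ intrinsicInterior ℝ (subdiff ϑ z) := by
  set D := subdiff ϑ 0 with hD
  obtain ⟨p, hpint, hpcoe⟩ := hμb
  obtain ⟨ε, hε, hball⟩ := Metric.isOpen_iff.mp isOpen_interior p hpint
  refine ⟨ε / 2, by positivity, ?_⟩
  intro z μ hμz hz hμnear
  obtain ⟨r, hr, hrinner, hμ0⟩ := subdiff_structure hproper_bot hproper_top h0 hpos hμz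
  -- μ ∈ ri D
  have hμaff : μ ∈ affineSpan ℝ D := subset_affineSpan ℝ D hμ0
  set q : affineSpan ℝ D := ⟨μ, hμaff⟩ with hq
  have hqball : q ∈ Metric.ball p ε := by
    rw [Metric.mem_ball, Subtype.dist_eq, hpcoe]
    calc dist μ μb = ‖μ - μb‖ := by rw [dist_eq_norm]
      _ ≤ ε / 2 := hμnear
      _ < ε := by linarith
  have hμri : μ ∈ intrinsicInterior ℝ D := ⟨q, hball hqball, rfl⟩
  -- subdiff ϑ z = D
  have hset : subdiff ϑ z = D := by
    -- openness of interior around q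
    obtain ⟨δ₀, hδ₀, hball'⟩ := Metric.isOpen_iff.mp isOpen_interior q (hball hqball)
    apply Set.Subset.antisymm
    · intro ν hν
      obtain ⟨r', hr', _, hν0⟩ := subdiff_structure hproper_bot hproper_top h0 hpos hν
      exact hν0
    · intro v hv
      have hvD : v ∈ D := hv
      have hvle : ∀ y, ((⟪v, y⟫ : ℝ) : EReal) ≤ ϑ y := (mem_subdiff_zero h0).mp hvD
      -- show ⟪v, z⟫ = r
      have hle : ⟪v, z⟫ ≤ r := by
        have := hvle z
        rw [hr, EReal.coe_le_coe_iff] at this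
        exact this
      have hge : r ≤ ⟪v, z⟫ := by
        set δ : ℝ := δ₀ / 2 / (‖μ - v‖ + 1) with hδdef
        have hδpos : 0 < δ := by positivity
        set w : Z := δ • (μ - v) + μ with hw
        have hwaff : w ∈ affineSpan ℝ D := by
          have := AffineSubspace.smul_vsub_vadd_mem (affineSpan ℝ D) δ hμaff
            (subset_affineSpan ℝ D hvD) hμaff
          simpa [hw] using this
        have hwdist : dist (⟨w, hwaff⟩ : affineSpan ℝ D) q < δ₀ := by
          rw [Subtype.dist_eq, hq]
          show dist w μ < δ₀
          rw [dist_eq_norm]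
          have : w - μ = δ • (μ - v) := by rw [hw]; abel
          rw [this, norm_smul, Real.norm_eq_abs, abs_of_pos hδpos]
          have h1 : ‖μ - v‖ < ‖μ - v‖ + 1 := by linarith
          calc δ * ‖μ - v‖ = δ₀ / 2 * (‖μ - v‖ / (‖μ - v‖ + 1)) := by
                rw [hδdef]; ring
            _ ≤ δ₀ / 2 * 1 := by
                apply mul_le_mul_of_nonneg_left _ (by positivity)
                rw [div_le_one (by positivity)]
                linarith
            _ < δ₀ := by linarith
        have hwD : w ∈ D := by
          have h := interior_subset (hball' (Metric.mem_ball.mpr hwdist))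
          exact h
        have hwle : ((⟪w, z⟫ : ℝ) : EReal) ≤ ϑ z := (mem_subdiff_zero h0).mp hwD z
        rw [hr, EReal.coe_le_coe_iff] at hwle
        have hexp : ⟪w, z⟫ = r + δ * (r - ⟪v, z⟫) := by
          rw [hw, inner_add_left, real_inner_smul_left, inner_sub_left, hrinner]
          ring
        rw [hexp] at hwle
        nlinarith
      -- conclude v ∈ subdiff ϑ z
      intro y
      have heq : ⟪v, z⟫ = r := le_antisymm hle hge
      have hsum : r + ⟪v, y - z⟫ = ⟪v, y⟫ := by
        rw [inner_sub_right]; linarith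
      calc ϑ z + ((⟪v, y - z⟫ : ℝ) : EReal)
          = ((⟪v, y⟫ : ℝ) : EReal) := by rw [hr, ← EReal.coe_add, hsum]
        _ ≤ ϑ y := hvle y
  exact ⟨hμri, by rw [hset]; exact hμri⟩
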